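/- Let T_1,...,T_n be pairwise coprime positive integers and let s : ℕⁿ → F_q be periodic with period (T_1,...,T_n). Define the one-dimensional sequence t : ℕ → F_q by t(m) = s(m mod T_1, ..., m mod T_n) = s(m, m, ..., m) for all m ≥ 0. Then t is periodic with period T_1·T_2⋯T_n and L(s) ≤ L(t). -/

import Mathlib

open MvPolynomial

/-- The value at `m` of the sequence `P·s`, i.e. `∑_j a_j s(m+j)` where `P = ∑_j a_j X^j`. -/
def recSum {n : ℕ} {F : Type} [Field F] (s : (Fin n → ℕ) → F)
    (P : MvPolynomial (Fin n) F) (m : Fin n → ℕ) : F :=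
  ∑ j ∈ P.support, P.coeff j * s (fun i => m i + j i)

lemma recSum_superset {n : ℕ} {F : Type} [Field F] (s : (Fin n → ℕ) → F)
    (P : MvPolynomial (Fin n) F) (m : Fin n → ℕ) {T : Finset (Fin n →₀ ℕ)}
    (hT : P.support ⊆ T) :
    ∑ j ∈ T, P.coeff j * s (fun i => m i + j i) = recSum s P m := by
  refine (Finset.sum_subset hT ?_).symm
  intro j _ hj
  rw [MvPolynomial.notMem_support_iff.mp hj, zero_mul]

/-- `I(s)`: the ideal of all polynomials `P = ∑_j a_j X^j` such that
`∑_j a_j s(m + j) = 0` for all `m`, i.e. of all linear recurrences satisfied by `s`. -/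
def seqIdeal {n : ℕ} {F : Type} [Field F] (s : (Fin n → ℕ) → F) :
    Ideal (MvPolynomial (Fin n) F) where
  carrier := {P | ∀ m, recSum s P m = 0}
  zero_mem' := by intro m; simp [recSum]
  add_mem' := by
    intro P Q hP hQ m
    have h : recSum s (P + Q) m
        = ∑ j ∈ P.support ∪ Q.support, (P + Q).coeff j * s (fun i => m i + j i) :=
      (recSum_superset s (P + Q) m (MvPolynomial.support_add)).symm
    rw [h]
    simp only [MvPolynomial.coeff_add, add_mul]
    rw [Finset.sum_add_distrib,
      recSum_superset s P m Finset.subset_union_left,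
      recSum_superset s Q m Finset.subset_union_right, hP m, hQ m, add_zero]
  smul_mem' := by
    intro c P hP
    simp only [smul_eq_mul, Set.mem_setOf_eq] at *
    induction c using MvPolynomial.induction_on generalizing P with
    | C a =>
      intro m
      have hsupp : (C a * P).support ⊆ P.support := by
        rw [← MvPolynomial.smul_eq_C_mul]
        exact Finsupp.support_smul
      rw [← recSum_superset s (C a * P) m hsupp]
      have : ∀ j ∈ P.support, (C a * P).coeff j * s (fun i => m i + j i)
          = a * (P.coeff j * s (fun i => m i + j i)) := by
        intro j _
        rw [MvPolynomial.coeff_C_mul, mul_assoc]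
      rw [Finset.sum_congr rfl this, ← Finset.mul_sum]
      rw [recSum_superset s P m (le_refl _)]
      rw [hP m, mul_zero]
    | add p q hp hq =>
      intro m
      rw [add_mul]
      have h1 := hp hP
      have h2 := hq hP
      have h : recSum s (p * P + q * P) m
          = ∑ j ∈ (p * P).support ∪ (q * P).support,
            (p * P + q * P).coeff j * s (fun i => m i + j i) :=
        (recSum_superset s _ m (MvPolynomial.support_add)).symm
      rw [h]
      simp only [MvPolynomial.coeff_add, add_mul]
      rw [Finset.sum_add_distrib,
        recSum_superset s _ m Finset.subset_union_left,
        recSum_superset s _ m Finset.subset_union_right, h1 m, h2 m, add_zero]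
    | mul_X p i hp =>
      intro m
      rw [mul_assoc]
      have hX : ∀ m', recSum s (X i * P) m' = 0 := by
        intro m'
        unfold recSum
        rw [MvPolynomial.support_X_mul, Finset.sum_map]
        have : ∀ j ∈ P.support,
            (X i * P).coeff (addLeftEmbedding (Finsupp.single i 1) j)
              * s (fun t => m' t + (addLeftEmbedding (Finsupp.single i 1) j) t)
            = P.coeff j * s (fun t => (m' t + Finsupp.single i 1 t) + j t) := by
          intro j _
          rw [addLeftEmbedding_apply, MvPolynomial.coeff_X_mul]
          have harg : (fun t => m' t + ((Finsupp.single i 1 + j : Fin n →₀ ℕ)) t)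
              = fun t => (m' t + Finsupp.single i 1 t) + j t := by
            funext t; rw [Finsupp.add_apply]; ring
          rw [harg]
        rw [Finset.sum_congr rfl this]
        have := hP (fun t => m' t + Finsupp.single i 1 t)
        unfold recSum at this
        exact this
      exact hp hX m

/-- The linear complexity `L(s)`: the dimension of `F[X_1,…,X_n]/I(s)` over `F`. -/
noncomputable def linComp {n : ℕ} {F : Type} [Field F] (s : (Fin n → ℕ) → F) : ℕ :=
  Module.finrank F (MvPolynomial (Fin n) F ⧸ seqIdeal s)

/-- `s` is periodic with period `(T_1,…,T_n)` if `X_i^{T_i} - 1 ∈ I(s)` for all `i`. -/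
def IsPeriodic {n : ℕ} {F : Type} [Field F] (T : Fin n → ℕ) (s : (Fin n → ℕ) → F) : Prop :=
  ∀ i, (X i : MvPolynomial (Fin n) F) ^ T i - 1 ∈ seqIdeal s

/-- The `k`-error linear complexity `L_k(s)` of a `(T_1,…,T_n)`-periodic sequence `s`:
the minimum of `L(σ)` over all `(T_1,…,T_n)`-periodic sequences `σ` differing from `s`
in at most `k` positions of the box `{m : 0 ≤ m_i ≤ T_i - 1}`. -/
noncomputable def errComp {n : ℕ} {F : Type} [Field F] (T : Fin n → ℕ) (k : ℕ)
    (s : (Fin n → ℕ) → F) : ℕ :=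
  sInf {K | ∃ σ : (Fin n → ℕ) → F, IsPeriodic T σ ∧
    ({m : Fin n → ℕ | (∀ i, m i < T i) ∧ σ m ≠ s m}).ncard ≤ k ∧ linComp σ = K}


section Helpers

variable {n : ℕ} {F : Type} [Field F]

lemma recSum_add (s : (Fin n → ℕ) → F) (P Q : MvPolynomial (Fin n) F) (m : Fin n → ℕ) :
    recSum s (P + Q) m = recSum s P m + recSum s Q m := by
  have h : recSum s (P + Q) m
      = ∑ j ∈ P.support ∪ Q.support, (P + Q).coeff j * s (fun i => m i + j i) :=
    (recSum_superset s (P + Q) m (MvPolynomial.support_add)).symm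
  rw [h]
  simp only [MvPolynomial.coeff_add, add_mul]
  rw [Finset.sum_add_distrib,
    recSum_superset s P m Finset.subset_union_left,
    recSum_superset s Q m Finset.subset_union_right]

lemma recSum_smul (s : (Fin n → ℕ) → F) (a : F) (P : MvPolynomial (Fin n) F) (m : Fin n → ℕ) :
    recSum s (a • P) m = a * recSum s P m := by
  have h : (a • P).support ⊆ P.support := Finsupp.support_smul
  rw [← recSum_superset s (a • P) m h]
  unfold recSum
  rw [Finset.mul_sum]
  refine Finset.sum_congr rfl fun j _ => ?_
  rw [MvPolynomial.coeff_smul, smul_eq_mul, mul_assoc]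

/-- `recSum` as a linear map in `P`. -/
def recSumLin (s : (Fin n → ℕ) → F) (m : Fin n → ℕ) : MvPolynomial (Fin n) F →ₗ[F] F where
  toFun P := recSum s P m
  map_add' P Q := recSum_add s P Q m
  map_smul' a P := recSum_smul s a P m

lemma recSum_monomial (s : (Fin n → ℕ) → F) (j : Fin n →₀ ℕ) (a : F) (m : Fin n → ℕ) :
    recSum s (MvPolynomial.monomial j a) m = a * s (fun i => m i + j i) := by
  classical
  by_cases ha : a = 0
  · simp [recSum, ha]
  · unfold recSum
    rw [MvPolynomial.support_monomial, if_neg ha, Finset.sum_singleton]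
    simp [MvPolynomial.coeff_monomial]

lemma periodic_shift {T : Fin n → ℕ} {s : (Fin n → ℕ) → F} (hs : IsPeriodic T s)
    (i : Fin n) (m : Fin n → ℕ) :
    s (fun i' => m i' + (Finsupp.single i (T i)) i') = s m := by
  have h := hs i m
  have e : (X i : MvPolynomial (Fin n) F) ^ T i - 1
      = MvPolynomial.monomial (Finsupp.single i (T i)) 1
        + MvPolynomial.monomial 0 (-1 : F) := by
    rw [MvPolynomial.X_pow_eq_monomial]
    have e1 : (MvPolynomial.monomial (0 : Fin n →₀ ℕ) (-1 : F)) = -1 := by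
      simp [MvPolynomial.monomial_zero']
    rw [e1]; ring
  rw [e, recSum_add, recSum_monomial, recSum_monomial] at h
  simp only [Finsupp.coe_zero, Pi.zero_apply, add_zero, one_mul, neg_one_mul] at h
  linear_combination h

lemma shift_mul {T : Fin n → ℕ} {s : (Fin n → ℕ) → F} (hs : IsPeriodic T s) :
    ∀ N (c m : Fin n → ℕ), (∑ i, c i) = N → s (fun i => m i + c i * T i) = s m := by
  intro N
  induction N using Nat.strong_induction_on with
  | _ N ih =>
    intro c m hc
    by_cases h0 : ∀ i, c i = 0
    · simp [h0]
    · push_neg at h0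
      obtain ⟨i, hi⟩ := h0
      set c' := Function.update c i (c i - 1) with hc'
      have key : (fun i' => m i' + c i' * T i')
          = fun i' => (m i' + c' i' * T i') + (Finsupp.single i (T i)) i' := by
        funext i'
        by_cases hii : i' = i
        · subst hii
          simp only [hc', Function.update_self, Finsupp.single_apply, if_pos rfl, if_true]
          have h1 : c i' - 1 + 1 = c i' := Nat.succ_pred_eq_of_pos (Nat.pos_of_ne_zero hi)
          calc m i' + c i' * T i' = m i' + (c i' - 1 + 1) * T i' := by rw [h1]
            _ = m i' + (c i' - 1) * T i' + T i' := by rw [add_mul, one_mul, add_assoc]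
        · simp [hc', Function.update_of_ne hii, Finsupp.single_apply, Ne.symm hii]
      rw [key, periodic_shift hs i]
      have hlt : (∑ i', c' i') < N := by
        rw [← hc]
        refine Finset.sum_lt_sum (fun i' _ => ?_) ⟨i, Finset.mem_univ i, ?_⟩
        · by_cases hii : i' = i
          · subst hii; simp [hc', Nat.sub_le]
          · simp [hc', Function.update_of_ne hii]
        · simp only [hc', Function.update_self]
          exact Nat.sub_lt (Nat.pos_of_ne_zero hi) one_pos
      exact ih _ hlt c' m rfl

lemma s_mod {T : Fin n → ℕ} {s : (Fin n → ℕ) → F} (hs : IsPeriodic T s) (m : Fin n → ℕ) :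
    s m = s (fun i => m i % T i) := by
  have h := shift_mul hs (∑ i, m i / T i) (fun i => m i / T i) (fun i => m i % T i) rfl
  simp only [Nat.mod_add_div'] at h
  exact h

lemma monomial_eq_prod (j : Fin n →₀ ℕ) :
    (MvPolynomial.monomial j (1 : F)) = ∏ i, (X i : MvPolynomial (Fin n) F) ^ j i := by
  rw [MvPolynomial.monomial_eq, map_one, one_mul]
  exact Finsupp.prod_fintype _ _ (fun i => pow_zero _)

lemma mk_X_pow {T : Fin n → ℕ} {s : (Fin n → ℕ) → F} (hs : IsPeriodic T s) (i : Fin n) :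
    (Ideal.Quotient.mk (seqIdeal s) (X i)) ^ T i = 1 := by
  have h0 : Ideal.Quotient.mk (seqIdeal s) ((X i : MvPolynomial (Fin n) F) ^ T i - 1) = 0 :=
    Ideal.Quotient.eq_zero_iff_mem.mpr (hs i)
  rw [map_sub, map_one, sub_eq_zero, map_pow] at h0
  exact h0

lemma mk_monomial_congr {T : Fin n → ℕ} {s : (Fin n → ℕ) → F} (hs : IsPeriodic T s)
    (j j' : Fin n →₀ ℕ) (h : ∀ i, j i % T i = j' i % T i) :
    Ideal.Quotient.mk (seqIdeal s) (MvPolynomial.monomial j 1)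
      = Ideal.Quotient.mk (seqIdeal s) (MvPolynomial.monomial j' 1) := by
  rw [monomial_eq_prod, monomial_eq_prod, map_prod, map_prod]
  refine Finset.prod_congr rfl fun i _ => ?_
  rw [map_pow, map_pow, pow_eq_pow_mod (j i) (mk_X_pow hs i),
      pow_eq_pow_mod (j' i) (mk_X_pow hs i), h i]

lemma span_monomials {T : Fin n → ℕ} (hT : ∀ i, 0 < T i) {s : (Fin n → ℕ) → F}
    (hs : IsPeriodic T s) :
    Submodule.span F ((fun j : Fin n →₀ ℕ =>
        Ideal.Quotient.mk (seqIdeal s) (MvPolynomial.monomial j 1)) ''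
      {j | ∀ i, j i < T i}) = ⊤ := by
  rw [eq_top_iff]
  intro x _
  obtain ⟨P, rfl⟩ := Ideal.Quotient.mk_surjective x
  have hP : Ideal.Quotient.mk (seqIdeal s) P
      = ∑ j ∈ P.support, Ideal.Quotient.mk (seqIdeal s) (MvPolynomial.monomial j (P.coeff j)) := by
    rw [← map_sum, MvPolynomial.support_sum_monomial_coeff]
  rw [hP]
  refine Submodule.sum_mem _ fun j _ => ?_
  have hm : (MvPolynomial.monomial j (P.coeff j)) = P.coeff j • MvPolynomial.monomial j (1 : F) := by
    rw [MvPolynomial.smul_monomial, smul_eq_mul, mul_one]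
  have hsm : Ideal.Quotient.mk (seqIdeal s) (MvPolynomial.monomial j (P.coeff j))
      = P.coeff j • Ideal.Quotient.mk (seqIdeal s) (MvPolynomial.monomial j 1) := by
    rw [hm, ← Ideal.Quotient.mkₐ_eq_mk F, map_smul]
  rw [hsm]
  refine Submodule.smul_mem _ _ ?_
  set j' : Fin n →₀ ℕ := Finsupp.equivFunOnFinite.symm (fun i => j i % T i) with hj'
  have hj'app : ∀ i, j' i = j i % T i := fun i => rfl
  rw [mk_monomial_congr hs j j' (fun i => by rw [hj'app i, Nat.mod_mod_of_dvd _ dvd_rfl])]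
  exact Submodule.subset_span ⟨j', fun i => by rw [hj'app i]; exact Nat.mod_lt _ (hT i), rfl⟩

lemma finite_quotient {T : Fin n → ℕ} (hT : ∀ i, 0 < T i) {s : (Fin n → ℕ) → F}
    (hs : IsPeriodic T s) :
    Module.Finite F (MvPolynomial (Fin n) F ⧸ seqIdeal s) := by
  have hfin : ({j : Fin n →₀ ℕ | ∀ i, j i < T i}).Finite := by
    have hsub : {j : Fin n →₀ ℕ | ∀ i, j i < T i}
        ⊆ ⇑Finsupp.equivFunOnFinite ⁻¹' (Set.pi Set.univ fun i => Set.Iio (T i)) := by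
      intro j hj i _; exact hj i
    exact (((Set.Finite.pi (fun i => Set.finite_Iio (T i)))).preimage
      (Equiv.injective _).injOn).subset hsub
  rw [Module.finite_def]
  refine ⟨(hfin.image (fun j : Fin n →₀ ℕ =>
    Ideal.Quotient.mk (seqIdeal s) (MvPolynomial.monomial j 1))).toFinset, ?_⟩
  rw [Set.Finite.coe_toFinset]
  exact span_monomials hT hs

end Helpers

section Main

variable {n : ℕ} {F : Type} [Field F]

/-- `Y ↦ X_1 ⋯ X_n`. -/
noncomputable def diagMap (n : ℕ) (F : Type) [Field F] : Fin 1 → MvPolynomial (Fin n) F :=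
  fun _ => ∏ i, X i

lemma prod_X_pow (k : ℕ) :
    (∏ i, (X i : MvPolynomial (Fin n) F)) ^ k
      = MvPolynomial.monomial (Finsupp.equivFunOnFinite.symm fun _ : Fin n => k) 1 := by
  rw [monomial_eq_prod, ← Finset.prod_pow]
  rfl

lemma recSum_aeval (s : (Fin n → ℕ) → F) (P : MvPolynomial (Fin 1) F) (m : Fin n → ℕ) :
    recSum s (MvPolynomial.aeval (diagMap n F) P) m
      = ∑ k ∈ P.support, P.coeff k * s (fun i => m i + k 0) := by
  have step : ∀ (k : Fin 1 →₀ ℕ) (a : F),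
      recSum s (MvPolynomial.aeval (diagMap n F) (MvPolynomial.monomial k a)) m
        = a * s (fun i => m i + k 0) := by
    intro k a
    rw [MvPolynomial.aeval_monomial]
    have hp : (k.prod fun i e => diagMap n F i ^ e) = diagMap n F 0 ^ k 0 := by
      rw [Finsupp.prod_fintype _ _ (fun i => pow_zero _), Fin.prod_univ_one]
    rw [hp]
    have hpow : diagMap n F 0 ^ k 0
        = MvPolynomial.monomial (Finsupp.equivFunOnFinite.symm fun _ : Fin n => k 0) (1 : F) :=
      prod_X_pow (k 0)
    rw [hpow, MvPolynomial.algebraMap_eq, MvPolynomial.C_mul_monomial, mul_one, recSum_monomial]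
    rfl
  calc recSum s (MvPolynomial.aeval (diagMap n F) P) m
      = recSumLin s m (MvPolynomial.aeval (diagMap n F)
          (∑ k ∈ P.support, MvPolynomial.monomial k (P.coeff k))) := by
        rw [MvPolynomial.support_sum_monomial_coeff]; rfl
    _ = ∑ k ∈ P.support, recSumLin s m (MvPolynomial.aeval (diagMap n F)
          (MvPolynomial.monomial k (P.coeff k))) := by rw [map_sum, map_sum]
    _ = ∑ k ∈ P.support, P.coeff k * s (fun i => m i + k 0) :=
        Finset.sum_congr rfl fun k _ => step k _

lemma aeval_mem {T : Fin n → ℕ} (hT : ∀ i, 0 < T i)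
    (hcop : ∀ i j, i ≠ j → Nat.Coprime (T i) (T j))
    {s : (Fin n → ℕ) → F} (hs : IsPeriodic T s)
    {t : (Fin 1 → ℕ) → F} (ht : ∀ m : Fin 1 → ℕ, t m = s (fun i => m 0 % T i))
    {P : MvPolynomial (Fin 1) F} (hP : P ∈ seqIdeal t) :
    MvPolynomial.aeval (diagMap n F) P ∈ seqIdeal s := by
  intro m
  rw [recSum_aeval]
  obtain ⟨m', hm'⟩ := Nat.chineseRemainderOfFinset (fun i => m i) T Finset.univ
    (fun i _ => (hT i).ne') (fun i _ j _ hij => hcop i j hij)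
  have h := hP (fun _ => m')
  unfold recSum at h
  rw [← h]
  refine Finset.sum_congr rfl fun k _ => ?_
  congr 1
  rw [ht]
  rw [s_mod hs (fun i => m i + k 0)]
  congr 1
  funext i
  have h1 : m' % T i = m i % T i := hm' i (Finset.mem_univ i)
  have h2 : m' + k 0 ≡ m i + k 0 [MOD T i] := Nat.ModEq.add_right (k 0) h1
  exact h2.symm

end Main

section Final

variable {n : ℕ} {F : Type} [Field F]

lemma t_periodic {T : Fin n → ℕ}
    {s : (Fin n → ℕ) → F}
    {t : (Fin 1 → ℕ) → F} (ht : ∀ m : Fin 1 → ℕ, t m = s (fun i => m 0 % T i)) :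
    IsPeriodic (fun _ : Fin 1 => ∏ i, T i) t := by
  intro i0 m
  have e : (X i0 : MvPolynomial (Fin 1) F) ^ (∏ i, T i) - 1
      = MvPolynomial.monomial (Finsupp.single i0 (∏ i, T i)) 1
        + MvPolynomial.monomial 0 (-1 : F) := by
    rw [MvPolynomial.X_pow_eq_monomial]
    have e1 : (MvPolynomial.monomial (0 : Fin 1 →₀ ℕ) (-1 : F)) = -1 := by
      simp [MvPolynomial.monomial_zero']
    rw [e1]; ring
  rw [e, recSum_add, recSum_monomial, recSum_monomial]
  simp only [Finsupp.coe_zero, Pi.zero_apply, add_zero, one_mul, neg_one_mul]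
  rw [ht, ht]
  have hi0 : i0 = 0 := Subsingleton.elim _ _
  subst hi0
  have key : (fun i => ((fun i' => m i' + (Finsupp.single (0 : Fin 1) (∏ i'', T i'')) i') 0) % T i)
      = fun i => m 0 % T i := by
    funext i
    simp only [Finsupp.single_eq_same]
    obtain ⟨c, hc⟩ := Finset.dvd_prod_of_mem T (Finset.mem_univ i)
    rw [hc, Nat.add_mul_mod_self_left]
  rw [key]
  ring

end Final

/-- If `T_1,…,T_n` are pairwise coprime and `s` is `(T_1,…,T_n)`-periodic, then the
one-dimensional sequence `t(m) = s(m mod T_1, …, m mod T_n)` is periodic with period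
`T_1 ⋯ T_n` and `L(s) ≤ L(t)`. -/
theorem statement_10 {n : ℕ} (hn : 1 ≤ n) {F : Type} [Field F] [Fintype F]
    (T : Fin n → ℕ) (hT : ∀ i, 0 < T i)
    (hcop : ∀ i j, i ≠ j → Nat.Coprime (T i) (T j))
    (s : (Fin n → ℕ) → F) (hs : IsPeriodic T s)
    (t : (Fin 1 → ℕ) → F) (ht : ∀ m : Fin 1 → ℕ, t m = s (fun i => m 0 % T i)) :
    IsPeriodic (fun _ : Fin 1 => ∏ i, T i) t ∧ linComp s ≤ linComp t := by
  have hprod : 0 < ∏ i, T i := Finset.prod_pos fun i _ => hT i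
  have htper : IsPeriodic (fun _ : Fin 1 => ∏ i, T i) t := t_periodic ht
  refine ⟨htper, ?_⟩
  have hft : Module.Finite F (MvPolynomial (Fin 1) F ⧸ seqIdeal t) :=
    finite_quotient (fun _ => hprod) htper
  set g : MvPolynomial (Fin 1) F →ₐ[F] (MvPolynomial (Fin n) F ⧸ seqIdeal s) :=
    (Ideal.Quotient.mkₐ F (seqIdeal s)).comp (MvPolynomial.aeval (diagMap n F)) with hgdef
  have hg : ∀ P ∈ seqIdeal t, g P = 0 := by
    intro P hP
    simp only [hgdef, AlgHom.comp_apply, Ideal.Quotient.mkₐ_eq_mk]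
    exact Ideal.Quotient.eq_zero_iff_mem.mpr (aeval_mem hT hcop hs ht hP)
  set φ := Ideal.Quotient.liftₐ (seqIdeal t) g hg with hφdef
  have hφmk : ∀ Q : MvPolynomial (Fin 1) F,
      φ (Ideal.Quotient.mk (seqIdeal t) Q) = g Q := by
    intro Q
    rw [hφdef, Ideal.Quotient.liftₐ_apply]
    rfl
  have hsurj : LinearMap.range φ.toLinearMap = ⊤ := by
    rw [eq_top_iff, ← span_monomials hT hs, Submodule.span_le]
    rintro _ ⟨j, hj, rfl⟩
    obtain ⟨k, hk⟩ := Nat.chineseRemainderOfFinset (fun i => j i) T Finset.univ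
      (fun i _ => (hT i).ne') (fun i _ j' _ hij => hcop i j' hij)
    refine ⟨Ideal.Quotient.mk (seqIdeal t) ((X 0 : MvPolynomial (Fin 1) F) ^ (k : ℕ)), ?_⟩
    have h1 : MvPolynomial.aeval (diagMap n F) ((X 0 : MvPolynomial (Fin 1) F) ^ (k : ℕ))
        = MvPolynomial.monomial (Finsupp.equivFunOnFinite.symm fun _ : Fin n => (k : ℕ)) 1 := by
      rw [map_pow, MvPolynomial.aeval_X]
      exact prod_X_pow _
    have h2 : Ideal.Quotient.mk (seqIdeal s)
          (MvPolynomial.monomial (Finsupp.equivFunOnFinite.symm fun _ : Fin n => (k : ℕ)) 1)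
        = Ideal.Quotient.mk (seqIdeal s) (MvPolynomial.monomial j 1) := by
      refine mk_monomial_congr hs _ _ fun i => ?_
      have hm : (k : ℕ) % T i = j i % T i := hk i (Finset.mem_univ i)
      have hlt : j i % T i = j i := Nat.mod_eq_of_lt (hj i)
      show (Finsupp.equivFunOnFinite.symm fun _ : Fin n => (k : ℕ)) i % T i = j i % T i
      rw [show (Finsupp.equivFunOnFinite.symm fun _ : Fin n => (k : ℕ)) i = (k : ℕ) from rfl, hm]
    show φ.toLinearMap _ = _
    rw [AlgHom.toLinearMap_apply, hφmk, hgdef]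
    simp only [AlgHom.comp_apply, Ideal.Quotient.mkₐ_eq_mk]
    rw [h1, h2]
  have hle := LinearMap.finrank_range_le (R := F) φ.toLinearMap
  rw [hsurj, finrank_top] at hle
  exact hle
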